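/- arXiv:2112.04416 — 2 statements merged into one kernel-verified Lean document; each statement's English description precedes it below -/
import Mathlib

section
/- There exists a continuous 1-periodic function Φ : ℝ → ℝ such that the summatory function of the periodicity function of the Thue–Morse word satisfies P_t(n) = n² Φ({log₂ n}) + O(n log n) as n → ∞, where {z} denotes the fractional part of z. -/
open Finset Filter Asymptotics

/-- `n` is a local period of the infinite word `w` at position `i`:
`n ≥ 1` and either (`n ≤ i` and `w_{i+k} = w_{i-n+k}` for all `k < n`)
or (`n > i` and `w_k = w_{n+k}` for all `k < i`). -/
def IsLocalPeriodAt {α : Type*} (w : ℕ → α) (i n : ℕ) : Prop :=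
  1 ≤ n ∧ ((n ≤ i ∧ ∀ k < n, w (i + k) = w (i - n + k)) ∨
           (i < n ∧ ∀ k < i, w k = w (n + k)))

/-- The periodicity function `p_w(i)`: the least local period of `w` at `i`. -/
noncomputable def perFn {α : Type*} (w : ℕ → α) (i : ℕ) : ℕ :=
  sInf {n | IsLocalPeriodAt w i n}

/-- The summatory function `P_w(n) = ∑_{j<n} p_w(j)`. -/
noncomputable def sumFn {α : Type*} (w : ℕ → α) (n : ℕ) : ℕ :=
  ∑ j ∈ Finset.range n, perFn w j

/-- The periodic complexity `h_w(n) = P_w(n)/n`. -/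
noncomputable def perComplexity {α : Type*} (w : ℕ → α) (n : ℕ) : ℝ :=
  (sumFn w n : ℝ) / n

/-- The Thue–Morse word: `t_i = 0` iff the number of 1's in the binary
representation of `i` is even. -/
def tm (i : ℕ) : ℕ :=
  if Even ((Nat.digits 2 i).count 1) then 0 else 1


lemma tm_cases (i : ℕ) : tm i = 0 ∨ tm i = 1 := by
  unfold tm; split <;> simp

lemma tm_two_mul (m : ℕ) : tm (2 * m) = tm m := by
  rcases Nat.eq_zero_or_pos m with h | h
  · simp [h]
  · unfold tm
    rw [Nat.digits_def' (by norm_num : 1 < 2) (by omega)]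
    simp [Nat.mul_div_cancel_left, Nat.mul_mod_right]

lemma tm_two_mul_add_one (m : ℕ) : tm (2 * m + 1) = 1 - tm m := by
  unfold tm
  rw [Nat.digits_def' (by norm_num : 1 < 2) (by omega)]
  have h1 : (2 * m + 1) % 2 = 1 := by omega
  have h2 : (2 * m + 1) / 2 = m := by omega
  rw [h1, h2]
  simp only [List.count_cons, if_pos rfl, Nat.even_add_one]
  by_cases h : Even (List.count 1 (Nat.digits 2 m)) <;> simp [h, Nat.even_add_one]

lemma tm_ne (m : ℕ) : tm (2 * m) ≠ tm (2 * m + 1) := by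
  rw [tm_two_mul, tm_two_mul_add_one]
  rcases tm_cases m with h | h <;> simp [h]

lemma tm_odd_ne (m : ℕ) : tm (2 * m + 1) ≠ tm m := by
  rw [tm_two_mul_add_one]
  rcases tm_cases m with h | h <;> simp [h]

lemma tm_binary {a b c : ℕ} (h1 : tm a ≠ tm c) (h2 : tm b ≠ tm c) : tm a = tm b := by
  rcases tm_cases a with ha | ha <;> rcases tm_cases b with hb | hb <;>
    rcases tm_cases c with hc | hc <;> omega

lemma tm_no_cube (a : ℕ) : ¬ (tm a = tm (a + 1) ∧ tm (a + 1) = tm (a + 2)) := by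
  rintro ⟨h1, h2⟩
  rcases Nat.even_or_odd a with ⟨m, hm⟩ | ⟨m, hm⟩
  · apply tm_ne m
    have e1 : 2 * m = a := by omega
    have e2 : 2 * m + 1 = a + 1 := by omega
    rw [e1]; exact h1
  · apply tm_ne (m + 1)
    have e1 : 2 * (m + 1) = a + 1 := by omega
    have e2 : 2 * (m + 1) + 1 = a + 2 := by omega
    rw [e1]; exact h2

lemma tm0 : tm 0 = 0 := by unfold tm; simp
lemma tm1 : tm 1 = 1 := by
  have h := tm_two_mul_add_one 0
  norm_num [tm0] at h; exact h
lemma tm2 : tm 2 = 1 := by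
  have h := tm_two_mul 1
  norm_num [tm1] at h; exact h
lemma tm3 : tm 3 = 0 := by
  have h := tm_two_mul_add_one 1
  norm_num [tm1] at h; exact h
lemma tm4 : tm 4 = 1 := by
  have h := tm_two_mul 2
  norm_num [tm2] at h; exact h

lemma tm_shift : ∀ k : ℕ, ∀ j < 2 ^ (k + 1), tm (j + 3 * 2 ^ k) = tm j := by
  intro k
  induction k with
  | zero =>
    intro j hj
    interval_cases j
    · show tm 3 = tm 0
      rw [tm0, tm3]
    · show tm 4 = tm 1
      rw [tm1, tm4]
  | succ k IH =>
    intro j hj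
    rcases Nat.even_or_odd j with ⟨u, hu⟩ | ⟨u, hu⟩
    · have h1 : j + 3 * 2 ^ (k + 1) = 2 * (u + 3 * 2 ^ k) := by
        rw [pow_succ]; omega
      have h2 : j = 2 * u := by omega
      rw [h1, h2, tm_two_mul, tm_two_mul]
      exact IH u (by rw [pow_succ] at hj ⊢; omega)
    · have h1 : j + 3 * 2 ^ (k + 1) = 2 * (u + 3 * 2 ^ k) + 1 := by
        rw [pow_succ]; omega
      have h2 : j = 2 * u + 1 := by omega
      rw [h1, h2, tm_two_mul_add_one, tm_two_mul_add_one]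
      rw [IH u (by rw [pow_succ] at hj ⊢; omega)]

/-- No square in the Thue-Morse word is centered at an odd position. -/
lemma claimA : ∀ n, 1 ≤ n → ∀ i, Odd i → n ≤ i →
    (∀ x, i - n ≤ x → x < i → tm x = tm (x + n)) → False := by
  intro n
  induction n using Nat.strong_induction_on with
  | _ n IH =>
    intro hn i hi hni H
    obtain ⟨v, hv⟩ := hi
    rcases Nat.even_or_odd n with ⟨n', hn'⟩ | ⟨m', hm'⟩
    · -- n even, n = 2 * n'
      have hn'1 : 1 ≤ n' := by omega
      have hlt : n < i := by
        rcases Nat.lt_or_ge n i with h | h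
        · exact h
        · exfalso; omega
      set i₁ := (i + 1) / 2 with hi₁
      have hi₁v : 2 * i₁ = i + 1 := by omega
      -- derived relations
      have D : ∀ m, i₁ - 1 - n' ≤ m → m < i₁ → tm m = tm (m + n') := by
        intro m hm1 hm2
        rcases Nat.lt_or_ge (2 * m) (i - n) with hx | hx
        · -- use odd position 2m+1 = i - n
          have hxe : 2 * m + 1 = i - n := by omega
          have hrel := H (2 * m + 1) (by omega) (by omega)
          have h1 : 2 * m + 1 + n = 2 * (m + n') + 1 := by omega
          rw [h1] at hrel
          exact tm_binary (tm_odd_ne m).symm (hrel ▸ (tm_odd_ne (m + n')).symm)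
        · have hrel := H (2 * m) hx (by omega)
          have h1 : 2 * m + n = 2 * (m + n') := by omega
          rw [h1, tm_two_mul, tm_two_mul] at hrel
          exact hrel
      rcases Nat.even_or_odd i₁ with ⟨w, hw⟩ | hodd
      · -- use j' = i₁ - 1 (odd)
        refine IH n' (by omega) (by omega) (i₁ - 1) ⟨w - 1, by omega⟩ (by omega) ?_
        intro x hx1 hx2
        exact D x (by omega) (by omega)
      · refine IH n' (by omega) (by omega) i₁ hodd (by omega) ?_
        intro x hx1 hx2
        exact D x (by omega) (by omega)
    · -- n odd, n = 2 * m' + 1; s = i - n even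
      set s := i - n with hs
      have hse : s + n = i := by omega
      obtain ⟨σ, hσ⟩ : Even s := by
        rcases Nat.even_or_odd s with h | h
        · exact h
        · exfalso; obtain ⟨u, hu⟩ := h; omega
      have hσ2 : s = 2 * σ := by omega
      rcases Nat.eq_zero_or_pos m' with hm0 | hm0
      · -- n = 1
        have := H (2 * σ) (by omega) (by omega)
        have h1 : 2 * σ + n = 2 * σ + 1 := by omega
        rw [h1] at this
        exact tm_ne σ this
      · have A' : ∀ m, σ ≤ m → m ≤ σ + m' → tm m ≠ tm (m + m') := by
          intro m h1 h2
          have hrel := H (2 * m) (by omega) (by omega)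
          have he : 2 * m + n = 2 * (m + m') + 1 := by omega
          rw [he, tm_two_mul] at hrel
          exact hrel ▸ (tm_odd_ne (m + m'))
        have B' : ∀ m, σ ≤ m → m < σ + m' → tm m ≠ tm (m + m' + 1) := by
          intro m h1 h2
          have hrel := H (2 * m + 1) (by omega) (by omega)
          have he : 2 * m + 1 + n = 2 * (m + m' + 1) := by omega
          rw [he, tm_two_mul] at hrel
          exact fun hc => (tm_odd_ne m) (hrel.symm ▸ hc.symm ▸ rfl)
        have C : ∀ m, σ ≤ m → m < σ + m' → tm (m + m') = tm (m + m' + 1) := by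
          intro m h1 h2
          exact tm_binary (fun hc => (A' m h1 (by omega)) hc.symm)
            (fun hc => (B' m h1 h2) hc.symm)
        have D : ∀ d, d ≤ m' → tm (σ + m') = tm (σ + m' + d) := by
          intro d
          induction d with
          | zero => simp
          | succ d IHd =>
            intro hd
            have e : σ + m' + (d + 1) = (σ + d) + m' + 1 := by omega
            rw [e]
            calc tm (σ + m') = tm ((σ + d) + m') := by
                  rw [show (σ + d) + m' = σ + m' + d by omega]; exact IHd (by omega)
              _ = tm ((σ + d) + m' + 1) := C (σ + d) (by omega) (by omega)
        have h1 := A' σ (le_refl σ) (by omega)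
        have h2 := A' (σ + m') (by omega) (by omega)
        have h3 := D m' (le_refl m')
        exact h2 (h3 ▸ rfl)

lemma tm6 : tm 6 = 0 := by
  have h := tm_two_mul 3
  norm_num [tm3] at h; exact h

lemma log23 : Nat.log 2 3 = 1 := by
  rw [Nat.log_eq_iff (Or.inl one_ne_zero)]; norm_num

lemma log24 : Nat.log 2 4 = 2 := by
  rw [Nat.log_eq_iff (Or.inl (by norm_num))]; norm_num

/-- Main lower bound: any local period at an odd position `i` is at least `3 * 2 ^ log2 i`. -/
lemma mainLB : ∀ i, Odd i → ∀ n, 1 ≤ n →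
    (∀ x, i - n ≤ x → x < i → tm x = tm (x + n)) → 3 * 2 ^ (Nat.log 2 i) ≤ n := by
  intro i
  induction i using Nat.strong_induction_on with
  | _ i IH =>
    intro hi n hn H
    rcases Nat.lt_or_ge i n with hlt | hge
    swap
    · exact absurd H (claimA n hn i hi hge)
    -- i < n
    obtain ⟨v, hv⟩ := hi
    rcases Nat.lt_or_ge i 5 with hsmall | hbig
    · -- i = 1 or i = 3
      interval_cases i
      · omega
      · -- i = 1, goal 3 ≤ n
        rw [Nat.log_one_right]
        simp only [pow_zero, mul_one]
        by_contra hc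
        push_neg at hc
        interval_cases n
        · have h := H 0 (by omega) (by omega)
          rw [tm0] at h
          norm_num at h
          rw [tm2] at h; exact absurd h (by norm_num)
      · omega
      · -- i = 3, goal 6 ≤ n
        rw [log23]
        by_contra hc
        push_neg at hc
        interval_cases n
        · have h := H 0 (by omega) (by omega)
          rw [tm0] at h
          norm_num at h
          rw [tm4] at h; exact absurd h (by norm_num)
        · have h := H 1 (by omega) (by omega)
          rw [tm1] at h
          norm_num at h
          rw [tm6] at h; exact absurd h (by norm_num)
      · omega
    · rcases Nat.even_or_odd n with ⟨n', hn'⟩ | ⟨m', hm'⟩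
      · -- n even
        have hn'1 : 1 ≤ n' := by omega
        set i₁ := (i + 1) / 2 with hi₁
        have hi₁v : 2 * i₁ = i + 1 := by omega
        have P : ∀ m, 2 * m < i → tm m = tm (m + n') := by
          intro m hm
          have hrel := H (2 * m) (by omega) hm
          have he : 2 * m + n = 2 * (m + n') := by omega
          rw [he, tm_two_mul, tm_two_mul] at hrel
          exact hrel
        have key : ∀ j', Odd j' → j' ≤ i₁ → i₁ - 1 ≤ j' → 3 * 2 ^ (Nat.log 2 i) ≤ n := by
          intro j' hj' hj1 hj2
          have hlog := IH j' (by omega) hj' n' hn'1 (fun x hx1 hx2 => P x (by omega))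
          have hk4 : Nat.log 2 4 ≤ Nat.log 2 i := Nat.log_mono_right (by omega)
          rw [log24] at hk4
          obtain ⟨k1, hk1⟩ : ∃ k1, Nat.log 2 i = k1 + 1 := ⟨Nat.log 2 i - 1, by omega⟩
          have hpl : 2 ^ (k1 + 1) ≤ i := hk1 ▸ Nat.pow_log_le_self 2 (by omega)
          have hps : 2 ^ (k1 + 1) = 2 * 2 ^ k1 := by rw [pow_succ]; ring
          have hne : i ≠ 2 ^ (k1 + 1) := by
            intro h
            have : Even i := by
              rw [h, hps]
              exact even_two_mul _
            omega
          have hj3 : 2 ^ k1 ≤ j' := by omega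
          have hlogj : k1 ≤ Nat.log 2 j' :=
            le_trans (le_of_eq (Nat.log_pow one_lt_two k1).symm) (Nat.log_mono_right hj3)
          have h5 : 2 ^ k1 ≤ 2 ^ Nat.log 2 j' := Nat.pow_le_pow_right (by norm_num) hlogj
          have h6 : 3 * 2 ^ k1 ≤ n' := le_trans (Nat.mul_le_mul_left 3 h5) hlog
          rw [hk1]
          omega
        rcases Nat.even_or_odd i₁ with ⟨w, hw⟩ | hodd
        · exact key (i₁ - 1) ⟨w - 1, by omega⟩ (by omega) (by omega)
        · exact key i₁ hodd (le_refl _) (by omega)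
      · -- n odd, n = 2m'+1, use cube-freeness
        exfalso
        have A'' : ∀ m, 2 * m + 1 < i → tm (m + m') = tm (m + m' + 1) := by
          intro m hm
          have hrel1 := H (2 * m) (by omega) (by omega)
          have he1 : 2 * m + n = 2 * (m + m') + 1 := by omega
          rw [he1, tm_two_mul] at hrel1
          have hrel2 := H (2 * m + 1) (by omega) hm
          have he2 : 2 * m + 1 + n = 2 * (m + m' + 1) := by omega
          rw [he2, tm_two_mul] at hrel2
          have h1 : tm (m + m') ≠ tm m := by
            intro hc
            apply tm_odd_ne (m + m')
            rw [← hrel1, hc]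
          have h2 : tm (m + m' + 1) ≠ tm m := by
            intro hc
            apply tm_odd_ne m
            rw [hrel2, hc]
          exact tm_binary h1 h2
        have c1 := A'' 0 (by omega)
        have c2 := A'' 1 (by omega)
        simp only [zero_add] at c1
        have c2' : tm (m' + 1) = tm (m' + 2) := by
          rw [show m' + 1 = 1 + m' by omega, show m' + 2 = 1 + m' + 1 by omega]
          exact c2
        exact tm_no_cube m' ⟨c1, c2'⟩

lemma isLP_to_rel {i n : ℕ} (h : IsLocalPeriodAt tm i n) :
    ∀ x, i - n ≤ x → x < i → tm x = tm (x + n) := by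
  obtain ⟨h1, h2 | h2⟩ := h
  · intro x hx1 hx2
    obtain ⟨hni, hall⟩ := h2
    have := hall (x - (i - n)) (by omega)
    have e1 : i + (x - (i - n)) = x + n := by omega
    have e2 : i - n + (x - (i - n)) = x := by omega
    rw [e1, e2] at this
    exact this.symm
  · intro x hx1 hx2
    obtain ⟨hni, hall⟩ := h2
    have := hall x (by omega)
    rwa [add_comm n x] at this

lemma perFn_odd {i : ℕ} (hi : Odd i) : perFn tm i = 3 * 2 ^ (Nat.log 2 i) := by
  set k := Nat.log 2 i with hk
  have hik : i < 2 ^ (k + 1) := Nat.lt_pow_succ_log_self (by norm_num) i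
  have hin : i < 3 * 2 ^ k := by
    have : 2 ^ (k + 1) = 2 * 2 ^ k := by rw [pow_succ]; ring
    omega
  have hmem : IsLocalPeriodAt tm i (3 * 2 ^ k) := by
    have hp : 0 < 2 ^ k := pow_pos (by norm_num) k
    refine ⟨by omega, Or.inr ⟨hin, ?_⟩⟩
    intro j hj
    rw [add_comm]
    exact (tm_shift k j (by omega)).symm
  have hne : {n | IsLocalPeriodAt tm i n}.Nonempty := ⟨3 * 2 ^ k, hmem⟩
  have h1 : perFn tm i ≤ 3 * 2 ^ k := Nat.sInf_le hmem
  have h2 : IsLocalPeriodAt tm i (perFn tm i) := Nat.sInf_mem hne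
  have h3 := mainLB i hi (perFn tm i) h2.1 (isLP_to_rel h2)
  rw [← hk] at h3
  omega

lemma perFn_even {i : ℕ} (hi : Even i) : perFn tm i ≤ 2 := by
  rcases Nat.eq_zero_or_pos i with h0 | hpos
  · have hmem : IsLocalPeriodAt tm i 1 := by
      refine ⟨le_refl 1, Or.inr ⟨by omega, ?_⟩⟩
      intro k hk
      omega
    exact le_trans (Nat.sInf_le hmem) (by norm_num)
  · obtain ⟨u, hu⟩ := hi
    have hu2 : i = 2 * u := by omega
    have hu1 : 1 ≤ u := by omega
    by_cases hcase : tm (i - 1) = tm i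
    · have hmem : IsLocalPeriodAt tm i 1 := by
        refine ⟨le_refl 1, Or.inl ⟨by omega, ?_⟩⟩
        intro k hk
        interval_cases k
        simpa using hcase.symm
      exact le_trans (Nat.sInf_le hmem) (by norm_num)
    · -- tm(i-1) ≠ tm i; then tm i = tm (i-2) and tm (i+1) = tm (i-1)
      have hne1 : tm (i - 2) ≠ tm (i - 1) := by
        have := tm_ne (u - 1)
        rwa [show 2 * (u - 1) + 1 = i - 1 by omega, show 2 * (u - 1) = i - 2 by omega] at this
      have he1 : tm i = tm (i - 2) := tm_binary (Ne.symm hcase) hne1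
      have hne2 : tm (i + 1) ≠ tm i := by
        have := tm_ne u
        rw [show 2 * u + 1 = i + 1 by omega, show 2 * u = i by omega] at this
        exact this.symm
      have he2 : tm (i + 1) = tm (i - 1) := tm_binary hne2 hcase
      have hmem : IsLocalPeriodAt tm i 2 := by
        refine ⟨by norm_num, Or.inl ⟨by omega, ?_⟩⟩
        intro k hk
        interval_cases k
        · simpa using he1
        · simpa [show i - 2 + 1 = i - 1 by omega] using he2
      exact Nat.sInf_le hmem

noncomputable def Afn (n : ℕ) : ℕ :=
  ∑ j ∈ Finset.range n, (if Odd j then 3 * 2 ^ (Nat.log 2 j) else 0)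

noncomputable def Efn (n : ℕ) : ℕ :=
  ∑ j ∈ Finset.range n, (if Odd j then 0 else perFn tm j)

lemma sum_split (n : ℕ) : sumFn tm n = Afn n + Efn n := by
  rw [sumFn, Afn, Efn, ← Finset.sum_add_distrib]
  apply Finset.sum_congr rfl
  intro j _
  by_cases h : Odd j
  · simp [h, perFn_odd h]
  · simp [h]

lemma Efn_le (n : ℕ) : Efn n ≤ 2 * n := by
  calc Efn n ≤ ∑ _j ∈ Finset.range n, 2 := by
        apply Finset.sum_le_sum
        intro j _
        by_cases h : Odd j
        · simp [h]
        · simp only [h, if_false]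
          exact perFn_even (Nat.not_odd_iff_even.1 h)
    _ = 2 * n := by simp [mul_comm]

lemma Afn_succ (q : ℕ) :
    Afn (q + 1) = Afn q + (if Odd q then 3 * 2 ^ (Nat.log 2 q) else 0) :=
  Finset.sum_range_succ _ _

lemma Afn_two : Afn 2 = 3 := by
  rw [Afn]
  rw [Finset.sum_range_succ, Finset.sum_range_succ, Finset.sum_range_zero]
  norm_num [Nat.log_one_right]

lemma Aform : ∀ n, 2 ≤ n → ∀ m, 2 ^ m ≤ n → n < 2 ^ (m + 1) →
    2 * Afn n + 2 * 4 ^ m + 3 * 2 ^ m * (n % 2) = 3 * 2 ^ m * n + 2 := by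
  intro n
  induction n using Nat.strong_induction_on with
  | _ n IH =>
    intro h2 m hm1 hm2
    rcases eq_or_lt_of_le h2 with he | h3
    · -- n = 2
      have hm : m = 1 := by
        have hm0 : m ≠ 0 := by
          rintro rfl
          rw [pow_one] at hm2
          omega
        have hm1' : m < 2 := by
          by_contra hc
          push_neg at hc
          have : 2 ^ 2 ≤ 2 ^ m := Nat.pow_le_pow_right (by norm_num) hc
          omega
        omega
      subst hm
      rw [← he, Afn_two]
      norm_num
    · -- n ≥ 3
      obtain ⟨q, rfl⟩ : ∃ q, n = q + 1 := ⟨n - 1, by omega⟩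
      rw [Afn_succ]
      rcases Nat.lt_or_ge q (2 ^ m) with hb | ha
      · -- q < 2^m, so q + 1 = 2^m
        have hn2m : q + 1 = 2 ^ m := by omega
        obtain ⟨m1, rfl⟩ : ∃ m1, m = m1 + 1 := by
          refine ⟨m - 1, ?_⟩
          have : m ≠ 0 := by
            rintro rfl
            norm_num at hm2
            omega
          omega
        have hps : 2 ^ (m1 + 1) = 2 * 2 ^ m1 := by rw [pow_succ]; ring
        have hq2 : 2 ^ m1 ≤ q := by omega
        have hqlt : q < 2 ^ (m1 + 1) := by omega
        have hq3 : 2 ≤ q := by omega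
        have hqodd : Odd q := by
          rcases Nat.even_or_odd q with hq | hq
          · exfalso
            obtain ⟨u, hu⟩ := hq
            have : 2 * 2 ^ m1 = 2 ^ (m1 + 1) := by rw [pow_succ]; ring
            omega
          · exact hq
        have hlq : Nat.log 2 q = m1 := Nat.log_eq_of_pow_le_of_lt_pow hq2 hqlt
        have hIH := IH q (by omega) hq3 m1 hq2 hqlt
        rw [hlq, if_pos hqodd]
        have hqm : q % 2 = 1 := Nat.odd_iff.1 hqodd
        have hnm : (q + 1) % 2 = 0 := by omega
        rw [hqm] at hIH
        rw [hnm]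
        zify at hIH ⊢
        have h4 : (4 : ℤ) ^ m1 = 2 ^ m1 * 2 ^ m1 := by
          rw [show (4 : ℤ) = 2 * 2 by norm_num, mul_pow]
        have hn' : (q : ℤ) + 1 = 2 * 2 ^ m1 := by exact_mod_cast hn2m.trans hps
        push_cast at hIH ⊢
        linear_combination hIH + 6 * h4 - 3 * (2 : ℤ) ^ m1 * hn'
      · -- 2^m ≤ q : same block
        have hlq : Nat.log 2 q = m := Nat.log_eq_of_pow_le_of_lt_pow ha (by omega)
        have hIH := IH q (by omega) (by omega) m ha (by omega)
        rcases Nat.even_or_odd q with hqe | hqo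
        · have hq2 : q % 2 = 0 := Nat.even_iff.1 hqe
          have hn2 : (q + 1) % 2 = 1 := by omega
          rw [hq2] at hIH
          rw [if_neg (Nat.not_odd_iff_even.2 hqe), hn2]
          zify at hIH ⊢
          push_cast at hIH ⊢
          linear_combination hIH
        · have hq2 : q % 2 = 1 := Nat.odd_iff.1 hqo
          have hn2 : (q + 1) % 2 = 0 := by omega
          rw [hq2] at hIH
          rw [if_pos hqo, hlq, hn2]
          zify at hIH ⊢
          push_cast at hIH ⊢
          linear_combination hIH

noncomputable def phiAux (y : ℝ) : ℝ :=
  3 / 2 * Real.exp (-(Real.log 2 * y)) - Real.exp (-(2 * Real.log 2 * y))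

noncomputable def Phi (y : ℝ) : ℝ := phiAux (Int.fract y)

lemma phiAux_cont : Continuous phiAux := by
  apply Continuous.sub
  · exact continuous_const.mul (Real.continuous_exp.comp (continuous_const.mul continuous_id).neg)
  · exact Real.continuous_exp.comp (continuous_const.mul continuous_id).neg

lemma exp_neg_log2 : Real.exp (-Real.log 2) = 1 / 2 := by
  rw [Real.exp_neg, Real.exp_log] <;> norm_num

lemma exp_neg_two_log2 : Real.exp (-(2 * Real.log 2)) = 1 / 4 := by
  have h : (2 : ℝ) * Real.log 2 = Real.log 4 := by
    rw [show (4 : ℝ) = 2 ^ (2 : ℕ) by norm_num, Real.log_pow]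
    push_cast; ring
  rw [h, Real.exp_neg, Real.exp_log] <;> norm_num

lemma phiAux_01 : phiAux 0 = phiAux 1 := by
  unfold phiAux
  rw [show -(Real.log 2 * 1) = -Real.log 2 by ring,
      show -(2 * Real.log 2 * 1) = -(2 * Real.log 2) by ring,
      exp_neg_log2, exp_neg_two_log2]
  norm_num

lemma Phi_cont : Continuous Phi := by
  have h := ContinuousOn.comp_fract'' (phiAux_cont.continuousOn) phiAux_01
  exact h

lemma Phi_periodic : Function.Periodic Phi 1 := by
  intro y
  unfold Phi
  rw [Int.fract_add_one]

lemma exp_log2_mul_nat (m : ℕ) : Real.exp (Real.log 2 * m) = 2 ^ m := by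
  rw [mul_comm, Real.exp_nat_mul, Real.exp_log] <;> norm_num

lemma Phi_eval (n : ℕ) (hn : 1 ≤ n) :
    (n : ℝ) ^ 2 * Phi (Int.fract (Real.logb 2 n)) =
      3 / 2 * (2 ^ (Nat.log 2 n) : ℕ) * n - ((4 ^ (Nat.log 2 n) : ℕ) : ℝ) := by
  have hn0 : (0 : ℝ) < n := by exact_mod_cast hn
  set m := Nat.log 2 n with hm
  have hfl : ⌊Real.logb 2 (n : ℝ)⌋ = (m : ℤ) := by
    rw [show ((2 : ℝ)) = ((2 : ℕ) : ℝ) by norm_num, Real.floor_logb_natCast (le_of_lt hn0),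
      Int.log_natCast]
  have hfr : Int.fract (Real.logb 2 (n : ℝ)) = Real.logb 2 (n : ℝ) - m := by
    rw [Int.fract, hfl]
    norm_num
  have hlogn : Real.log 2 * Real.logb 2 (n : ℝ) = Real.log n := by
    rw [Real.logb]
    field_simp
  have hE1 : Real.exp (-(Real.log 2 * Int.fract (Real.logb 2 (n : ℝ)))) = 2 ^ m / n := by
    rw [hfr, show -(Real.log 2 * (Real.logb 2 (n : ℝ) - m)) =
        Real.log 2 * m + -(Real.log 2 * Real.logb 2 (n : ℝ)) by ring,
      Real.exp_add, hlogn, Real.exp_neg, Real.exp_log hn0, exp_log2_mul_nat]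
    ring
  have hE2 : Real.exp (-(2 * Real.log 2 * Int.fract (Real.logb 2 (n : ℝ)))) =
      (2 ^ m / n) ^ 2 := by
    rw [show -(2 * Real.log 2 * Int.fract (Real.logb 2 (n : ℝ))) =
        -(Real.log 2 * Int.fract (Real.logb 2 (n : ℝ))) +
        -(Real.log 2 * Int.fract (Real.logb 2 (n : ℝ))) by ring,
      Real.exp_add, hE1]
    ring
  unfold Phi phiAux
  rw [Int.fract_fract, hE1, hE2]
  have h4 : ((4 ^ m : ℕ) : ℝ) = (2 ^ m : ℝ) * (2 ^ m : ℝ) := by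
    push_cast
    rw [show (4 : ℝ) = 2 * 2 by norm_num, mul_pow]
  push_cast
  push_cast at h4
  field_simp
  rw [h4]
  ring

theorem tm_sumFn_asymptotics' :
    ∃ Φ : ℝ → ℝ, Continuous Φ ∧ Function.Periodic Φ 1 ∧
      (fun n : ℕ => (sumFn tm n : ℝ) - (n : ℝ) ^ 2 * Φ (Int.fract (Real.logb 2 n)))
        =O[Filter.atTop] (fun n : ℕ => (n : ℝ) * Real.log n) := by
  refine ⟨Phi, Phi_cont, Phi_periodic, ?_⟩
  rw [Asymptotics.isBigO_iff]
  refine ⟨5 / Real.log 2, ?_⟩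
  rw [Filter.eventually_atTop]
  refine ⟨2, fun n hn => ?_⟩
  have hlog2 : (0 : ℝ) < Real.log 2 := Real.log_pos (by norm_num)
  -- main estimate : |sumFn tm n - n^2 Φ| ≤ 5 n
  set m := Nat.log 2 n with hm
  have hm1 : 2 ^ m ≤ n := Nat.pow_log_le_self 2 (by omega)
  have hm2 : n < 2 ^ (m + 1) := Nat.lt_pow_succ_log_self (by norm_num) n
  have hA := Aform n hn m hm1 hm2
  have hsplit := sum_split n
  have hEle := Efn_le n
  have hPhi := Phi_eval n (by omega)
  rw [← hm] at hPhi
  -- cast everything to ℝ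
  have hAc : 2 * (Afn n : ℝ) + 2 * ((4 ^ m : ℕ) : ℝ) + 3 * ((2 ^ m : ℕ) : ℝ) * ((n % 2 : ℕ) : ℝ)
      = 3 * ((2 ^ m : ℕ) : ℝ) * n + 2 := by exact_mod_cast hA
  have hsc : (sumFn tm n : ℝ) = (Afn n : ℝ) + (Efn n : ℝ) := by exact_mod_cast hsplit
  have hEc : (Efn n : ℝ) ≤ 2 * n := by exact_mod_cast hEle
  have hE0 : (0 : ℝ) ≤ (Efn n : ℝ) := by positivity
  have hXn : ((2 ^ m : ℕ) : ℝ) ≤ (n : ℝ) := by exact_mod_cast hm1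
  have hX0 : (0 : ℝ) ≤ ((2 ^ m : ℕ) : ℝ) := by positivity
  have hr1 : ((n % 2 : ℕ) : ℝ) ≤ 1 := by
    have : n % 2 ≤ 1 := by omega
    exact_mod_cast this
  have hr0 : (0 : ℝ) ≤ ((n % 2 : ℕ) : ℝ) := by positivity
  have hn2 : (2 : ℝ) ≤ (n : ℝ) := by exact_mod_cast hn
  have hmain : |(sumFn tm n : ℝ) - (n : ℝ) ^ 2 * Phi (Int.fract (Real.logb 2 n))| ≤ 5 * n := by
    rw [hPhi, hsc, abs_le]
    constructor <;> nlinarith [hAc, hEc, hE0, hXn, hX0, hr1, hr0, hn2]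
  have hlogn : Real.log 2 ≤ Real.log n := Real.log_le_log (by norm_num) hn2
  calc ‖(sumFn tm n : ℝ) - (n : ℝ) ^ 2 * Phi (Int.fract (Real.logb 2 n))‖ ≤ 5 * n := by
        rw [Real.norm_eq_abs]; exact hmain
    _ ≤ 5 / Real.log 2 * ((n : ℝ) * Real.log n) := by
        rw [div_mul_eq_mul_div, le_div_iff₀ hlog2]
        nlinarith [hlogn, hn2, hlog2]
    _ ≤ 5 / Real.log 2 * ‖(n : ℝ) * Real.log n‖ := by
        apply mul_le_mul_of_nonneg_left _ (by positivity)
        exact le_abs_self _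

theorem tm_sumFn_asymptotics :
    ∃ Φ : ℝ → ℝ, Continuous Φ ∧ Function.Periodic Φ 1 ∧
      (fun n : ℕ => (sumFn tm n : ℝ) - (n : ℝ) ^ 2 * Φ (Int.fract (Real.logb 2 n)))
        =O[atTop] (fun n : ℕ => (n : ℝ) * Real.log n) := by
  exact tm_sumFn_asymptotics'
end

section
/- For all n ≥ 1, the periodic complexity of the period-doubling word satisfies (1/3)log₂ n − 1/18 ≤ h_pd(n) ≤ (4/3)log₂ n + 3. In particular, h_pd(n) = Θ(log n). -/
open Finset Filter Asymptotics

/-- The period-doubling word: `pd_i = 1` iff the 2-adic valuation of `i+1` is odd. -/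
def pd (i : ℕ) : ℕ :=
  if Odd ((i + 1).factorization 2) then 1 else 0



lemma pd_le_one (i : ℕ) : pd i ≤ 1 := by unfold pd; split <;> omega

lemma pd_even (i : ℕ) : pd (2 * i) = 0 := by
  have h : (2 * i + 1).factorization 2 = 0 :=
    Nat.factorization_eq_zero_of_not_dvd (by omega)
  simp [pd, h]

lemma pd_odd (i : ℕ) : pd (2 * i + 1) = 1 - pd i := by
  have h2 : (2 * i + 1 + 1) = 2 * (i + 1) := by ring
  have h : (2 * (i + 1)).factorization 2 = (i+1).factorization 2 + 1 := by
    rw [Nat.factorization_mul (by norm_num) (by omega)]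
    simp [Nat.Prime.factorization_self Nat.prime_two]
    omega
  unfold pd
  rw [h2, h]
  rcases Nat.even_or_odd ((i+1).factorization 2) with he | ho
  · rw [if_pos (Even.add_one he), if_neg (Nat.not_odd_iff_even.mpr he)]
  · have hne : ¬ Odd ((i+1).factorization 2 + 1) := by
      rw [Nat.odd_iff] at ho ⊢; omega
    rw [if_neg hne, if_pos ho]

lemma pd_no11 {i : ℕ} (h1 : pd i = 1) (h2 : pd (i+1) = 1) : False := by
  rcases Nat.even_or_odd i with ⟨k, hk⟩ | ⟨k, hk⟩
  · rw [hk, show k + k = 2*k by ring, pd_even] at h1; omega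
  · rw [show i + 1 = 2*(k+1) by omega, pd_even] at h2; omega

lemma factz_shift {m k : ℕ} (h0 : 0 < k) (h : k < 2 ^ m) :
    ((2 ^ m + k).factorization 2) = k.factorization 2 := by
  set v := k.factorization 2 with hv
  have hd1 : 2 ^ v ∣ k := Nat.ordProj_dvd k 2
  have hd2 : ¬ 2 ^ (v + 1) ∣ k := Nat.pow_succ_factorization_not_dvd (by omega) Nat.prime_two
  have hvm : v < m := by
    by_contra hc
    have : 2 ^ m ≤ 2 ^ v := Nat.pow_le_pow_right (by norm_num) (by omega)
    have := Nat.le_of_dvd h0 hd1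
    omega
  have hdd : 2 ^ v ∣ 2 ^ m + k := dvd_add (pow_dvd_pow 2 hvm.le) hd1
  have hnd : ¬ 2 ^ (v + 1) ∣ 2 ^ m + k := by
    intro hc
    exact hd2 ((Nat.dvd_add_right (pow_dvd_pow 2 (by omega))).mp hc)
  have hne : 2 ^ m + k ≠ 0 := by positivity
  have h1 : v ≤ (2 ^ m + k).factorization 2 :=
    (Nat.Prime.pow_dvd_iff_le_factorization Nat.prime_two hne).mp hdd
  have h2 : ¬ (v + 1 ≤ (2 ^ m + k).factorization 2) := fun hc =>
    hnd ((Nat.Prime.pow_dvd_iff_le_factorization Nat.prime_two hne).mpr hc)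
  omega

lemma pd_shift {m k : ℕ} (h : k + 1 < 2 ^ m) : pd (2 ^ m + k) = pd k := by
  unfold pd
  rw [show 2 ^ m + k + 1 = 2 ^ m + (k + 1) by ring, factz_shift (by omega) h]

lemma isLocalPeriodAt_pow {m i : ℕ} (h : i < 2 ^ m) : IsLocalPeriodAt pd i (2 ^ m) := by
  refine ⟨Nat.one_le_two_pow, Or.inr ⟨h, fun k hk => ?_⟩⟩
  exact (pd_shift (by omega)).symm

lemma perFn_mem (i : ℕ) : IsLocalPeriodAt pd i (perFn pd i) := by
  have : {n | IsLocalPeriodAt pd i n}.Nonempty :=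
    ⟨2 ^ i.succ, isLocalPeriodAt_pow (by have := @Nat.lt_two_pow_self i; have : (2:ℕ)^i ≤ 2^i.succ := Nat.pow_le_pow_right (by norm_num) (Nat.le_succ i); omega)⟩
  exact Nat.sInf_mem this

lemma perFn_le {i n : ℕ} (h : IsLocalPeriodAt pd i n) : perFn pd i ≤ n := Nat.sInf_le h

lemma perFn_pos (i : ℕ) : 1 ≤ perFn pd i := (perFn_mem i).1

lemma perFn_eq {i n : ℕ} (h : IsLocalPeriodAt pd i n)
    (hmin : ∀ m < n, ¬ IsLocalPeriodAt pd i m) : perFn pd i = n := by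
  have h1 := perFn_le h
  rcases lt_or_eq_of_le h1 with hlt | he
  · exact absurd (perFn_mem i) (hmin _ hlt)
  · exact he

lemma pd_one : pd 1 = 1 := by
  have h1 : pd (2*0+1) = 1 - pd 0 := pd_odd 0
  have h2 : pd (2*0) = 0 := pd_even 0
  norm_num at h1 h2
  omega

-- (W) witness doubling
lemma lp_double {i q : ℕ} (h : IsLocalPeriodAt pd i q) :
    IsLocalPeriodAt pd (2*i) (2*q) ∧ IsLocalPeriodAt pd (2*i+1) (2*q) := by
  obtain ⟨hq, hcase⟩ := h
  rcases hcase with ⟨hqi, hm⟩ | ⟨hiq, hp⟩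
  · constructor
    · refine ⟨by omega, Or.inl ⟨by omega, fun k hk => ?_⟩⟩
      rcases Nat.even_or_odd k with ⟨j, hj⟩ | ⟨j, hj⟩
      · rw [show 2*i + k = 2*(i+j) by omega, show 2*i - 2*q + k = 2*(i-q+j) by omega,
          pd_even, pd_even]
      · rw [show 2*i + k = 2*(i+j)+1 by omega, show 2*i - 2*q + k = 2*(i-q+j)+1 by omega,
          pd_odd, pd_odd, hm j (by omega)]
    · refine ⟨by omega, Or.inl ⟨by omega, fun k hk => ?_⟩⟩
      rcases Nat.even_or_odd k with ⟨j, hj⟩ | ⟨j, hj⟩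
      · rw [show 2*i+1 + k = 2*(i+j)+1 by omega, show 2*i+1 - 2*q + k = 2*(i-q+j)+1 by omega,
          pd_odd, pd_odd, hm j (by omega)]
      · rw [show 2*i+1 + k = 2*(i+j+1) by omega, show 2*i+1 - 2*q + k = 2*(i-q+j+1) by omega,
          pd_even, pd_even]
  · constructor
    · refine ⟨by omega, Or.inr ⟨by omega, fun k hk => ?_⟩⟩
      rcases Nat.even_or_odd k with ⟨j, hj⟩ | ⟨j, hj⟩
      · rw [show k = 2*j by omega, show 2*q + 2*j = 2*(q+j) by ring, pd_even, pd_even]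
      · rw [show k = 2*j+1 by omega, show 2*q + (2*j+1) = 2*(q+j)+1 by ring,
          pd_odd, pd_odd, hp j (by omega)]
    · refine ⟨by omega, Or.inr ⟨by omega, fun k hk => ?_⟩⟩
      rcases Nat.even_or_odd k with ⟨j, hj⟩ | ⟨j, hj⟩
      · rw [show k = 2*j by omega, show 2*q + 2*j = 2*(q+j) by ring, pd_even, pd_even]
      · rw [show k = 2*j+1 by omega, show 2*q + (2*j+1) = 2*(q+j)+1 by ring,
          pd_odd, pd_odd, hp j (by omega)]

-- (D) period halving
lemma lp_halve_even {i q : ℕ} (h : IsLocalPeriodAt pd (2*i) (2*q)) :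
    IsLocalPeriodAt pd i q := by
  obtain ⟨hq, hcase⟩ := h
  rcases hcase with ⟨hqi, hm⟩ | ⟨hiq, hp⟩
  · refine ⟨by omega, Or.inl ⟨by omega, fun k hk => ?_⟩⟩
    have := hm (2*k+1) (by omega)
    rw [show 2*i + (2*k+1) = 2*(i+k)+1 by omega,
        show 2*i - 2*q + (2*k+1) = 2*(i-q+k)+1 by omega, pd_odd, pd_odd] at this
    have a1 := pd_le_one (i+k); have a2 := pd_le_one (i-q+k); omega
  · refine ⟨by omega, Or.inr ⟨by omega, fun k hk => ?_⟩⟩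
    have := hp (2*k+1) (by omega)
    rw [show 2*k+1 = 2*k+1 by rfl, show 2*q + (2*k+1) = 2*(q+k)+1 by ring,
        pd_odd, pd_odd] at this
    have a1 := pd_le_one k; have a2 := pd_le_one (q+k); omega

lemma lp_halve_odd {i q : ℕ} (h : IsLocalPeriodAt pd (2*i+1) (2*q)) :
    IsLocalPeriodAt pd i q := by
  obtain ⟨hq, hcase⟩ := h
  rcases hcase with ⟨hqi, hm⟩ | ⟨hiq, hp⟩
  · refine ⟨by omega, Or.inl ⟨by omega, fun k hk => ?_⟩⟩
    have := hm (2*k) (by omega)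
    rw [show 2*i+1 + 2*k = 2*(i+k)+1 by omega,
        show 2*i+1 - 2*q + 2*k = 2*(i-q+k)+1 by omega, pd_odd, pd_odd] at this
    have a1 := pd_le_one (i+k); have a2 := pd_le_one (i-q+k); omega
  · refine ⟨by omega, Or.inr ⟨by omega, fun k hk => ?_⟩⟩
    have := hp (2*k+1) (by omega)
    rw [show 2*q + (2*k+1) = 2*(q+k)+1 by ring, pd_odd, pd_odd] at this
    have a1 := pd_le_one k; have a2 := pd_le_one (q+k); omega

-- (O1) no odd local period ≥ 3 at even positions
lemma lp_odd_even_pos {i t : ℕ} (hi : 1 ≤ i) (h : IsLocalPeriodAt pd (2*i) (2*t+3)) :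
    False := by
  obtain ⟨-, hcase⟩ := h
  rcases hcase with ⟨hqi, hm⟩ | ⟨hiq, hp⟩
  · have h0 := hm 0 (by omega)
    have h2 := hm 2 (by omega)
    rw [show 2*i + 0 = 2*i by ring, show 2*i - (2*t+3) + 0 = 2*(i-t-2)+1 by omega,
        pd_even, pd_odd] at h0
    rw [show 2*i + 2 = 2*(i+1) by ring, show 2*i - (2*t+3) + 2 = 2*(i-t-1)+1 by omega,
        pd_even, pd_odd] at h2
    have a1 := pd_le_one (i-t-2); have a2 := pd_le_one (i-t-1)
    exact pd_no11 (i := i-t-2) (by omega) (by rw [show i-t-2+1 = i-t-1 by omega]; omega)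
  · have h1 := hp 1 (by omega)
    rw [pd_one, show 2*t+3 + 1 = 2*(t+2) by ring, pd_even] at h1
    exact absurd h1 one_ne_zero

-- (O2) no odd local period at odd positions 2i+1 with i even
lemma lp_odd_odd_pos {s t i : ℕ} (hi : 1 ≤ i) (hieven : i = 2*s)
    (h : IsLocalPeriodAt pd (2*i+1) (2*t+1)) : False := by
  obtain ⟨-, hcase⟩ := h
  rcases hcase with ⟨hqi, hm⟩ | ⟨hiq, hp⟩
  · have h0 := hm 0 (by omega)
    rw [show 2*i+1 + 0 = 2*i+1 by ring, show 2*i+1 - (2*t+1) + 0 = 2*(i-t) by omega,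
        pd_odd, pd_even, hieven, pd_even] at h0
    simp at h0
  · have h1 := hp 1 (by omega)
    rw [pd_one, show 2*t+1 + 1 = 2*(t+1) by ring, pd_even] at h1
    exact absurd h1 one_ne_zero

-- local period 1 characterization at i+1
lemma lp_one_iff (i : ℕ) : IsLocalPeriodAt pd (i+1) 1 ↔ pd (i+1) = pd i := by
  constructor
  · rintro ⟨-, ⟨-, hm⟩ | ⟨hlt, -⟩⟩
    · simpa using hm 0 (by omega)
    · omega
  · intro h
    exact ⟨le_refl 1, Or.inl ⟨by omega, fun k hk => by
      simp only [show k = 0 by omega]; simpa using h⟩⟩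

lemma lp_one_even {i : ℕ} (hi : 1 ≤ i) (h : IsLocalPeriodAt pd (2*i) 1) : pd (i-1) = 1 := by
  obtain ⟨-, ⟨-, hm⟩ | ⟨hlt, -⟩⟩ := h
  · have h0 := hm 0 (by omega)
    rw [show 2*i + 0 = 2*i by ring, show 2*i - 1 + 0 = 2*(i-1)+1 by omega,
        pd_even, pd_odd] at h0
    have := pd_le_one (i-1); omega
  · omega

lemma lp_one_odd {i : ℕ} (h : IsLocalPeriodAt pd (2*i+1) 1) : pd i = 1 := by
  obtain ⟨-, ⟨-, hm⟩ | ⟨hlt, -⟩⟩ := h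
  · have h0 := hm 0 (by omega)
    rw [show 2*i+1 + 0 = 2*i+1 by ring, show 2*i+1 - 1 + 0 = 2*i by omega,
        pd_odd, pd_even] at h0
    have := pd_le_one i; omega
  · omega

lemma perFn_zero : perFn pd 0 = 1 :=
  perFn_eq ⟨le_refl 1, Or.inr ⟨one_pos, fun k hk => absurd hk (by omega)⟩⟩
    (fun m hm hlp => by have := hlp.1; omega)

lemma perFn_one : perFn pd 1 = 2 := by
  refine perFn_eq ⟨by omega, Or.inr ⟨one_lt_two, fun k hk => ?_⟩⟩ ?_
  · rw [show k = 0 by omega, show (2:ℕ) + 0 = 2*1 by ring, show (0:ℕ) = 2*0 by ring,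
      pd_even, pd_even]
  · intro m hm hlp
    have h1 : m = 1 := by have := hlp.1; omega
    subst h1
    have := (lp_one_iff 0).mp (by simpa using hlp)
    rw [pd_one, show pd 0 = 0 from by simpa using pd_even 0] at this
    omega

lemma perFn_eq_one {i : ℕ} (h : pd (i+1) = pd i) : perFn pd (i+1) = 1 :=
  perFn_eq ((lp_one_iff i).mpr h) (fun m hm hlp => by have := hlp.1; omega)

lemma perFn_ge_two {i : ℕ} (h : pd (i+1) ≠ pd i) : 2 ≤ perFn pd (i+1) := by
  have h1 := perFn_pos (i+1)
  rcases Nat.lt_or_ge (perFn pd (i+1)) 2 with hlt | hge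
  · have : perFn pd (i+1) = 1 := by omega
    have hmem := perFn_mem (i+1)
    rw [this] at hmem
    exact absurd ((lp_one_iff i).mp hmem) h
  · exact hge

-- case A
lemma rec_A {i : ℕ} (hi : 1 ≤ i) (h0 : pd i = 0) (h1 : pd (i-1) = 0) :
    perFn pd (2*i) = 2 ∧ perFn pd (2*i+1) = 2 := by
  constructor
  · refine perFn_eq ⟨by omega, Or.inl ⟨by omega, fun k hk => ?_⟩⟩ ?_
    · interval_cases k
      · rw [show 2*i + 0 = 2*i by ring, show 2*i - 2 + 0 = 2*(i-1) by omega,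
          pd_even, pd_even]
      · rw [show 2*i + 1 = 2*i+1 by ring, show 2*i - 2 + 1 = 2*(i-1)+1 by omega,
          pd_odd, pd_odd, h0, show i - 1 = i-1 by rfl, h1]
    · intro m hm hlp
      have : m = 1 := by have := hlp.1; omega
      subst this
      have := lp_one_even hi hlp; omega
  · refine perFn_eq ⟨by omega, Or.inl ⟨by omega, fun k hk => ?_⟩⟩ ?_
    · interval_cases k
      · rw [show 2*i+1 + 0 = 2*i+1 by ring, show 2*i+1 - 2 + 0 = 2*(i-1)+1 by omega,
          pd_odd, pd_odd, h0, h1]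
      · rw [show 2*i+1 + 1 = 2*(i+1) by ring, show 2*i+1 - 2 + 1 = 2*i by omega,
          pd_even, pd_even]
    · intro m hm hlp
      have : m = 1 := by have := hlp.1; omega
      subst this
      have := lp_one_odd hlp; omega

-- case B : i even (i = 2s), pd (i-1) = 1
lemma rec_B {i s : ℕ} (hi : 1 ≤ i) (hs : i = 2*s) (h1 : pd (i-1) = 1) :
    perFn pd (2*i) = 1 ∧ perFn pd (2*i+1) = 2 * perFn pd i := by
  constructor
  · refine perFn_eq ⟨le_refl 1, Or.inl ⟨by omega, fun k hk => ?_⟩⟩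
      (fun m hm hlp => by have := hlp.1; omega)
    rw [show k = 0 by omega, show 2*i + 0 = 2*i by ring,
      show 2*i - 1 + 0 = 2*(i-1)+1 by omega, pd_even, pd_odd, h1]
  · refine perFn_eq (lp_double (perFn_mem i)).2 ?_
    intro m hm hlp
    rcases Nat.even_or_odd m with ⟨j, hj⟩ | ⟨j, hj⟩
    · have hj' : m = 2*j := by omega
      subst hj'
      have hj1 : 1 ≤ j := by have := hlp.1; omega
      have := perFn_le (lp_halve_odd hlp)
      omega
    · exact lp_odd_odd_pos hi hs (by rwa [show m = 2*j+1 by omega] at hlp)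

-- case C : pd i = 1
lemma rec_C {i : ℕ} (h1 : pd i = 1) :
    perFn pd (2*i) = 2 * perFn pd i ∧ perFn pd (2*i+1) = 1 := by
  have hodd : ∃ s, i = 2*s+1 := by
    rcases Nat.even_or_odd i with ⟨s, hs⟩ | ⟨s, hs⟩
    · rw [show i = 2*s by omega, pd_even] at h1; omega
    · exact ⟨s, by omega⟩
  obtain ⟨s, hs⟩ := hodd
  have hi : 1 ≤ i := by omega
  constructor
  · refine perFn_eq (lp_double (perFn_mem i)).1 ?_
    intro m hm hlp
    rcases Nat.even_or_odd m with ⟨j, hj⟩ | ⟨j, hj⟩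
    · have hj' : m = 2*j := by omega
      subst hj'
      have hj1 : 1 ≤ j := by have := hlp.1; omega
      have := perFn_le (lp_halve_even hlp)
      omega
    · rcases Nat.lt_or_ge m 3 with hm3 | hm3
      · have : m = 1 := by have := hlp.1; omega
        subst this
        have := lp_one_even hi hlp
        rw [show i - 1 = 2*s by omega, pd_even] at this
        omega
      · exact lp_odd_even_pos hi (by rwa [show m = 2*(j-1)+3 by omega] at hlp)
  · refine perFn_eq ⟨le_refl 1, Or.inl ⟨by omega, fun k hk => ?_⟩⟩
      (fun m hm hlp => by have := hlp.1; omega)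
    rw [show k = 0 by omega, show 2*i+1 + 0 = 2*i+1 by ring,
      show 2*i+1 - 1 + 0 = 2*i by omega, pd_odd, pd_even, h1]

lemma pair_bounds (i : ℕ) :
    2 * perFn pd i + 1 ≤ perFn pd (2*i) + perFn pd (2*i+1) ∧
    perFn pd (2*i) + perFn pd (2*i+1) ≤ 2 * perFn pd i + 2 := by
  rcases Nat.eq_zero_or_pos i with rfl | hi
  · norm_num [perFn_zero, perFn_one]
  rcases Nat.lt_or_ge (pd i) 1 with h0 | h1'
  · -- pd i = 0
    have h0 : pd i = 0 := by omega
    rcases Nat.lt_or_ge (pd (i-1)) 1 with hA | hB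
    · have hA : pd (i-1) = 0 := by omega
      obtain ⟨e1, e2⟩ := rec_A hi h0 hA
      have : perFn pd i = 1 := by
        have := perFn_eq_one (i := i-1) (by rw [show i-1+1 = i by omega]; omega)
        rwa [show i-1+1 = i by omega] at this
      omega
    · have hB : pd (i-1) = 1 := by have := pd_le_one (i-1); omega
      have hs : ∃ s, i = 2*s := by
        rcases Nat.even_or_odd i with ⟨s, h⟩ | ⟨s, h⟩
        · exact ⟨s, by omega⟩
        · rw [show i - 1 = 2*s by omega, pd_even] at hB; omega
      obtain ⟨s, hs⟩ := hs
      obtain ⟨e1, e2⟩ := rec_B hi hs hB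
      have hge := perFn_pos i
      omega
  · have h1 : pd i = 1 := by have := pd_le_one i; omega
    obtain ⟨e1, e2⟩ := rec_C h1
    have hge := perFn_pos i
    omega


lemma log2_gt : (2/3 : ℝ) < Real.log 2 := by
  have := Real.log_two_gt_d9; norm_num at this ⊢; linarith

lemma log2_lt : Real.log 2 < 0.7 := by
  have := Real.log_two_lt_d9; norm_num at this ⊢; linarith

lemma logb_le_aux {x : ℝ} (c : ℕ) (hx : (2:ℝ)^c ≤ x) :
    Real.logb 2 x ≤ c - 3/2 + 3 * x / 2^(c+1) := by
  have hc : (0:ℝ) < 2^c := by positivity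
  have hx0 : (0:ℝ) < x := lt_of_lt_of_le hc hx
  have hlog2 := log2_gt
  have h1 : Real.log (x / 2^c) ≤ x / 2^c - 1 := Real.log_le_sub_one_of_pos (by positivity)
  have h2 : Real.log (x / 2^c) = Real.log x - c * Real.log 2 := by
    rw [Real.log_div (ne_of_gt hx0) (ne_of_gt hc), Real.log_pow]
  have h3 : Real.log x ≤ c * Real.log 2 + (x / 2^c - 1) := by linarith
  rw [Real.logb, div_le_iff₀ (by linarith : (0:ℝ) < Real.log 2)]
  have key : (c - 3/2 + 3 * x / 2^(c+1)) * Real.log 2 =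
      c * Real.log 2 + (3 * x / 2^(c+1) - 3/2) * Real.log 2 := by ring
  rw [key]
  have h4 : (0:ℝ) ≤ 3 * x / 2^(c+1) - 3/2 := by
    rw [pow_succ]
    have : (3:ℝ) * x / (2^c * 2) = (3/2) * (x / 2^c) := by ring
    rw [this]
    have : (1:ℝ) ≤ x / 2^c := (one_le_div hc).mpr hx
    linarith
  have h5 : (2/3 : ℝ) * (3 * x / 2^(c+1) - 3/2) ≤ (3 * x / 2^(c+1) - 3/2) * Real.log 2 := by
    nlinarith
  have h6 : (2/3 : ℝ) * (3 * x / 2^(c+1) - 3/2) = x / 2^c - 1 := by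
    rw [pow_succ]; ring
  linarith

lemma logb_mono_nat {a b : ℕ} (ha : 1 ≤ a) (hab : a ≤ b) :
    Real.logb 2 a ≤ Real.logb 2 b := by
  apply Real.logb_le_logb_of_le one_lt_two (by exact_mod_cast ha) (by exact_mod_cast hab)

lemma logb_nat_nonneg {n : ℕ} (hn : 1 ≤ n) : 0 ≤ Real.logb 2 n :=
  Real.logb_nonneg one_lt_two (by exact_mod_cast hn)

lemma logb_pow_nat (k : ℕ) : Real.logb 2 ((2:ℝ)^k) = k := by
  rw [Real.logb_pow, Real.logb_self_eq_one one_lt_two]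
  ring

lemma logb_succ_mul {n : ℕ} (hn : 1 ≤ n) :
    (n:ℝ) * Real.logb 2 (n+1) ≤ n * Real.logb 2 n + 3/2 := by
  have hn0 : (0:ℝ) < n := by exact_mod_cast hn
  have h1 : Real.log ((n+1)/n) ≤ (n+1)/(n:ℝ) - 1 := Real.log_le_sub_one_of_pos (by positivity)
  have h2 : Real.log ((n+1)/(n:ℝ)) = Real.log (n+1) - Real.log n := by
    rw [Real.log_div (by positivity) (ne_of_gt hn0)]
  have h3 : ((n:ℝ)+1)/n - 1 = 1/n := by field_simp; ring
  have h4 : Real.log (n+1) - Real.log n ≤ 1/n := by rw [← h3, ← h2]; exact h1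
  have h7 : Real.logb 2 (n+1) - Real.logb 2 n
      = (Real.log (n+1) - Real.log n) / Real.log 2 := by
    rw [Real.logb, Real.logb]; push_cast; ring
  have h8 : (Real.log (n+1) - Real.log n) / Real.log 2 ≤ (1/n) / (2/3) :=
    div_le_div₀ (by positivity) h4 (by norm_num) (le_of_lt log2_gt)
  have h9 : ((1:ℝ)/n) / (2/3) = 3/(2*n) := by field_simp
  have h10 : Real.logb 2 (n+1) ≤ Real.logb 2 n + 3/(2*n) := by
    rw [← h9]; linarith [h7, h8]
  have h11 := mul_le_mul_of_nonneg_left h10 (le_of_lt hn0)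
  have h12 : (n:ℝ) * (Real.logb 2 n + 3/(2*n)) = n * Real.logb 2 n + 3/2 := by
    field_simp
  linarith [h11, h12.le, h12.ge]

lemma sumFn_succ {α : Type*} (w : ℕ → α) (n : ℕ) :
    sumFn w (n+1) = sumFn w n + perFn w n := Finset.sum_range_succ _ _

lemma sumFn_mono {a b : ℕ} (h : a ≤ b) : sumFn pd a ≤ sumFn pd b :=
  Finset.sum_le_sum_of_subset (Finset.range_subset_range.mpr h)

lemma sumFn_double (n : ℕ) :
    sumFn pd (2*n) = ∑ i ∈ Finset.range n, (perFn pd (2*i) + perFn pd (2*i+1)) := by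
  induction n with
  | zero => rfl
  | succ n ih =>
    rw [show 2*(n+1) = (2*n+1)+1 by ring, sumFn_succ, show 2*n+1 = (2*n)+1 from rfl,
      sumFn_succ, ih, Finset.sum_range_succ]
    ring

lemma sumFn_double_le (n : ℕ) : sumFn pd (2*n) ≤ 2 * sumFn pd n + 2*n := by
  rw [sumFn_double]
  calc ∑ i ∈ Finset.range n, (perFn pd (2*i) + perFn pd (2*i+1))
      ≤ ∑ i ∈ Finset.range n, (2 * perFn pd i + 2) :=
        Finset.sum_le_sum (fun i _ => (pair_bounds i).2)
    _ = 2 * sumFn pd n + 2*n := by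
        rw [Finset.sum_add_distrib, ← Finset.mul_sum, Finset.sum_const, Finset.card_range]
        simp [sumFn, mul_comm]

lemma sumFn_double_ge (n : ℕ) : 2 * sumFn pd n + n ≤ sumFn pd (2*n) := by
  rw [sumFn_double]
  calc 2 * sumFn pd n + n = ∑ i ∈ Finset.range n, (2 * perFn pd i + 1) := by
        rw [Finset.sum_add_distrib, ← Finset.mul_sum, Finset.sum_const, Finset.card_range]
        simp [sumFn, mul_comm]
    _ ≤ _ := Finset.sum_le_sum (fun i _ => (pair_bounds i).1)
lemma pdv0 : pd 0 = 0 := by simpa using pd_even 0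
lemma pdv1 : pd 1 = 1 := by have h := pd_odd 0; norm_num [pdv0] at h; omega
lemma pdv2 : pd 2 = 0 := by simpa using pd_even 1
lemma pdv3 : pd 3 = 0 := by have h := pd_odd 1; norm_num [pdv1] at h; omega
lemma pdv4 : pd 4 = 0 := by simpa using pd_even 2
lemma pdv5 : pd 5 = 1 := by have h := pd_odd 2; norm_num [pdv2] at h; omega
lemma pdv6 : pd 6 = 0 := by simpa using pd_even 3
lemma pdv7 : pd 7 = 1 := by have h := pd_odd 3; norm_num [pdv3] at h; omega
lemma pdv8 : pd 8 = 0 := by simpa using pd_even 4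
lemma pdv9 : pd 9 = 1 := by have h := pd_odd 4; norm_num [pdv4] at h; omega
lemma pdv10 : pd 10 = 0 := by simpa using pd_even 5
lemma pdv11 : pd 11 = 0 := by have h := pd_odd 5; norm_num [pdv5] at h; omega
lemma pdv12 : pd 12 = 0 := by simpa using pd_even 6
lemma pdv13 : pd 13 = 1 := by have h := pd_odd 6; norm_num [pdv6] at h; omega
lemma pdv14 : pd 14 = 0 := by simpa using pd_even 7
lemma pdv15 : pd 15 = 0 := by have h := pd_odd 7; norm_num [pdv7] at h; omega
lemma pdv16 : pd 16 = 0 := by simpa using pd_even 8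
lemma pdv17 : pd 17 = 1 := by have h := pd_odd 8; norm_num [pdv8] at h; omega
lemma pdv18 : pd 18 = 0 := by simpa using pd_even 9
lemma pv0 : perFn pd 0 = 1 := perFn_zero
lemma pv1 : perFn pd 1 = 2 := perFn_one
lemma pv2 : perFn pd 2 = 4 := by have h := (rec_C (i := 1) pdv1).1; norm_num [pv1] at h; exact h
lemma pv3 : perFn pd 3 = 1 := by have h := (rec_C (i := 1) pdv1).2; norm_num at h; exact h
lemma pv4 : perFn pd 4 = 1 := by have h := (rec_B (i := 2) (s := 1) (by norm_num) (by norm_num) (by norm_num [pdv1])).1; norm_num at h; exact h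
lemma pv5 : perFn pd 5 = 8 := by have h := (rec_B (i := 2) (s := 1) (by norm_num) (by norm_num) (by norm_num [pdv1])).2; norm_num [pv2] at h; exact h
lemma pv6 : perFn pd 6 = 2 := by have h := (rec_A (i := 3) (by norm_num) pdv3 (by norm_num [pdv2])).1; norm_num at h; exact h
lemma pv7 : perFn pd 7 = 2 := by have h := (rec_A (i := 3) (by norm_num) pdv3 (by norm_num [pdv2])).2; norm_num at h; exact h
lemma pv8 : perFn pd 8 = 2 := by have h := (rec_A (i := 4) (by norm_num) pdv4 (by norm_num [pdv3])).1; norm_num at h; exact h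
lemma pv9 : perFn pd 9 = 2 := by have h := (rec_A (i := 4) (by norm_num) pdv4 (by norm_num [pdv3])).2; norm_num at h; exact h
lemma pv10 : perFn pd 10 = 16 := by have h := (rec_C (i := 5) pdv5).1; norm_num [pv5] at h; exact h
lemma pv11 : perFn pd 11 = 1 := by have h := (rec_C (i := 5) pdv5).2; norm_num at h; exact h
lemma pv12 : perFn pd 12 = 1 := by have h := (rec_B (i := 6) (s := 3) (by norm_num) (by norm_num) (by norm_num [pdv5])).1; norm_num at h; exact h
lemma pv13 : perFn pd 13 = 4 := by have h := (rec_B (i := 6) (s := 3) (by norm_num) (by norm_num) (by norm_num [pdv5])).2; norm_num [pv6] at h; exact h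
lemma pv14 : perFn pd 14 = 4 := by have h := (rec_C (i := 7) pdv7).1; norm_num [pv7] at h; exact h
lemma pv15 : perFn pd 15 = 1 := by have h := (rec_C (i := 7) pdv7).2; norm_num at h; exact h
lemma pv16 : perFn pd 16 = 1 := by have h := (rec_B (i := 8) (s := 4) (by norm_num) (by norm_num) (by norm_num [pdv7])).1; norm_num at h; exact h
lemma pv17 : perFn pd 17 = 4 := by have h := (rec_B (i := 8) (s := 4) (by norm_num) (by norm_num) (by norm_num [pdv7])).2; norm_num [pv8] at h; exact h
lemma pv18 : perFn pd 18 = 4 := by have h := (rec_C (i := 9) pdv9).1; norm_num [pv9] at h; exact h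
lemma pv19 : perFn pd 19 = 1 := by have h := (rec_C (i := 9) pdv9).2; norm_num at h; exact h
lemma pv20 : perFn pd 20 = 1 := by have h := (rec_B (i := 10) (s := 5) (by norm_num) (by norm_num) (by norm_num [pdv9])).1; norm_num at h; exact h
lemma pv21 : perFn pd 21 = 32 := by have h := (rec_B (i := 10) (s := 5) (by norm_num) (by norm_num) (by norm_num [pdv9])).2; norm_num [pv10] at h; exact h
lemma pv22 : perFn pd 22 = 2 := by have h := (rec_A (i := 11) (by norm_num) pdv11 (by norm_num [pdv10])).1; norm_num at h; exact h
lemma pv23 : perFn pd 23 = 2 := by have h := (rec_A (i := 11) (by norm_num) pdv11 (by norm_num [pdv10])).2; norm_num at h; exact h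
lemma pv24 : perFn pd 24 = 2 := by have h := (rec_A (i := 12) (by norm_num) pdv12 (by norm_num [pdv11])).1; norm_num at h; exact h
lemma pv25 : perFn pd 25 = 2 := by have h := (rec_A (i := 12) (by norm_num) pdv12 (by norm_num [pdv11])).2; norm_num at h; exact h
lemma pv26 : perFn pd 26 = 8 := by have h := (rec_C (i := 13) pdv13).1; norm_num [pv13] at h; exact h
lemma pv27 : perFn pd 27 = 1 := by have h := (rec_C (i := 13) pdv13).2; norm_num at h; exact h
lemma pv28 : perFn pd 28 = 1 := by have h := (rec_B (i := 14) (s := 7) (by norm_num) (by norm_num) (by norm_num [pdv13])).1; norm_num at h; exact h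
lemma pv29 : perFn pd 29 = 8 := by have h := (rec_B (i := 14) (s := 7) (by norm_num) (by norm_num) (by norm_num [pdv13])).2; norm_num [pv14] at h; exact h
lemma pv30 : perFn pd 30 = 2 := by have h := (rec_A (i := 15) (by norm_num) pdv15 (by norm_num [pdv14])).1; norm_num at h; exact h
lemma pv31 : perFn pd 31 = 2 := by have h := (rec_A (i := 15) (by norm_num) pdv15 (by norm_num [pdv14])).2; norm_num at h; exact h
lemma pv32 : perFn pd 32 = 2 := by have h := (rec_A (i := 16) (by norm_num) pdv16 (by norm_num [pdv15])).1; norm_num at h; exact h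
lemma pv33 : perFn pd 33 = 2 := by have h := (rec_A (i := 16) (by norm_num) pdv16 (by norm_num [pdv15])).2; norm_num at h; exact h
lemma pv34 : perFn pd 34 = 8 := by have h := (rec_C (i := 17) pdv17).1; norm_num [pv17] at h; exact h
lemma pv35 : perFn pd 35 = 1 := by have h := (rec_C (i := 17) pdv17).2; norm_num at h; exact h
lemma Sv0 : sumFn pd 0 = 0 := rfl
lemma Sv1 : sumFn pd 1 = 1 := by rw [show (1:ℕ) = 0+1 from rfl, sumFn_succ, Sv0, pv0]
lemma Sv2 : sumFn pd 2 = 3 := by rw [show (2:ℕ) = 1+1 from rfl, sumFn_succ, Sv1, pv1]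
lemma Sv3 : sumFn pd 3 = 7 := by rw [show (3:ℕ) = 2+1 from rfl, sumFn_succ, Sv2, pv2]
lemma Sv4 : sumFn pd 4 = 8 := by rw [show (4:ℕ) = 3+1 from rfl, sumFn_succ, Sv3, pv3]
lemma Sv5 : sumFn pd 5 = 9 := by rw [show (5:ℕ) = 4+1 from rfl, sumFn_succ, Sv4, pv4]
lemma Sv6 : sumFn pd 6 = 17 := by rw [show (6:ℕ) = 5+1 from rfl, sumFn_succ, Sv5, pv5]
lemma Sv7 : sumFn pd 7 = 19 := by rw [show (7:ℕ) = 6+1 from rfl, sumFn_succ, Sv6, pv6]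
lemma Sv8 : sumFn pd 8 = 21 := by rw [show (8:ℕ) = 7+1 from rfl, sumFn_succ, Sv7, pv7]
lemma Sv9 : sumFn pd 9 = 23 := by rw [show (9:ℕ) = 8+1 from rfl, sumFn_succ, Sv8, pv8]
lemma Sv10 : sumFn pd 10 = 25 := by rw [show (10:ℕ) = 9+1 from rfl, sumFn_succ, Sv9, pv9]
lemma Sv11 : sumFn pd 11 = 41 := by rw [show (11:ℕ) = 10+1 from rfl, sumFn_succ, Sv10, pv10]
lemma Sv12 : sumFn pd 12 = 42 := by rw [show (12:ℕ) = 11+1 from rfl, sumFn_succ, Sv11, pv11]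
lemma Sv13 : sumFn pd 13 = 43 := by rw [show (13:ℕ) = 12+1 from rfl, sumFn_succ, Sv12, pv12]
lemma Sv14 : sumFn pd 14 = 47 := by rw [show (14:ℕ) = 13+1 from rfl, sumFn_succ, Sv13, pv13]
lemma Sv15 : sumFn pd 15 = 51 := by rw [show (15:ℕ) = 14+1 from rfl, sumFn_succ, Sv14, pv14]
lemma Sv16 : sumFn pd 16 = 52 := by rw [show (16:ℕ) = 15+1 from rfl, sumFn_succ, Sv15, pv15]
lemma Sv17 : sumFn pd 17 = 53 := by rw [show (17:ℕ) = 16+1 from rfl, sumFn_succ, Sv16, pv16]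
lemma Sv18 : sumFn pd 18 = 57 := by rw [show (18:ℕ) = 17+1 from rfl, sumFn_succ, Sv17, pv17]
lemma Sv19 : sumFn pd 19 = 61 := by rw [show (19:ℕ) = 18+1 from rfl, sumFn_succ, Sv18, pv18]
lemma Sv20 : sumFn pd 20 = 62 := by rw [show (20:ℕ) = 19+1 from rfl, sumFn_succ, Sv19, pv19]
lemma Sv21 : sumFn pd 21 = 63 := by rw [show (21:ℕ) = 20+1 from rfl, sumFn_succ, Sv20, pv20]
lemma Sv22 : sumFn pd 22 = 95 := by rw [show (22:ℕ) = 21+1 from rfl, sumFn_succ, Sv21, pv21]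
lemma Sv23 : sumFn pd 23 = 97 := by rw [show (23:ℕ) = 22+1 from rfl, sumFn_succ, Sv22, pv22]
lemma Sv24 : sumFn pd 24 = 99 := by rw [show (24:ℕ) = 23+1 from rfl, sumFn_succ, Sv23, pv23]
lemma Sv25 : sumFn pd 25 = 101 := by rw [show (25:ℕ) = 24+1 from rfl, sumFn_succ, Sv24, pv24]
lemma Sv26 : sumFn pd 26 = 103 := by rw [show (26:ℕ) = 25+1 from rfl, sumFn_succ, Sv25, pv25]
lemma Sv27 : sumFn pd 27 = 111 := by rw [show (27:ℕ) = 26+1 from rfl, sumFn_succ, Sv26, pv26]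
lemma Sv28 : sumFn pd 28 = 112 := by rw [show (28:ℕ) = 27+1 from rfl, sumFn_succ, Sv27, pv27]
lemma Sv29 : sumFn pd 29 = 113 := by rw [show (29:ℕ) = 28+1 from rfl, sumFn_succ, Sv28, pv28]
lemma Sv30 : sumFn pd 30 = 121 := by rw [show (30:ℕ) = 29+1 from rfl, sumFn_succ, Sv29, pv29]
lemma Sv31 : sumFn pd 31 = 123 := by rw [show (31:ℕ) = 30+1 from rfl, sumFn_succ, Sv30, pv30]
lemma Sv32 : sumFn pd 32 = 125 := by rw [show (32:ℕ) = 31+1 from rfl, sumFn_succ, Sv31, pv31]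
lemma Sv33 : sumFn pd 33 = 127 := by rw [show (33:ℕ) = 32+1 from rfl, sumFn_succ, Sv32, pv32]
lemma Sv34 : sumFn pd 34 = 129 := by rw [show (34:ℕ) = 33+1 from rfl, sumFn_succ, Sv33, pv33]
lemma Sv35 : sumFn pd 35 = 137 := by rw [show (35:ℕ) = 34+1 from rfl, sumFn_succ, Sv34, pv34]
lemma Sv36 : sumFn pd 36 = 138 := by rw [show (36:ℕ) = 35+1 from rfl, sumFn_succ, Sv35, pv35]

lemma upper_base {n s k : ℕ} (hn : 1 ≤ n) (hs : sumFn pd n = s) (hk : 2^k ≤ n)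
    (h : 3*s ≤ 4*k*n + 3*n) : (sumFn pd n : ℝ) ≤ 4/3 * n * Real.logb 2 n + n := by
  have hlk : (k:ℝ) ≤ Real.logb 2 n := by
    rw [← logb_pow_nat k]
    have : ((2:ℝ))^k = ((2^k : ℕ) : ℝ) := by push_cast; ring
    rw [this]
    exact logb_mono_nat (Nat.one_le_two_pow) hk
  have hc : (3:ℝ)*s ≤ 4*k*n + 3*n := by exact_mod_cast h
  have hn0 : (0:ℝ) ≤ n := Nat.cast_nonneg n
  rw [hs]
  nlinarith [mul_le_mul_of_nonneg_left hlk (show (0:ℝ) ≤ 4/3*n by positivity)]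

lemma lower_base {n s c : ℕ} (hn : 1 ≤ n) (hs : sumFn pd n = s) (hc : n ≤ 2^c)
    (h : 6*c*n ≤ 18*s + n) : (n:ℝ) * (Real.logb 2 n / 3 - 1/18) ≤ (sumFn pd n : ℝ) := by
  have hlk : Real.logb 2 n ≤ (c:ℝ) := by
    rw [← logb_pow_nat c]
    have : ((2:ℝ))^c = ((2^c : ℕ) : ℝ) := by push_cast; ring
    rw [this]
    exact logb_mono_nat hn hc
  have hcc : (6:ℝ)*c*n ≤ 18*s + n := by exact_mod_cast h
  have hn0 : (0:ℝ) ≤ n := Nat.cast_nonneg n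
  rw [hs]
  nlinarith [mul_le_mul_of_nonneg_left hlk (show (0:ℝ) ≤ n/3 by positivity)]

lemma upper_all : ∀ n : ℕ, 1 ≤ n → (sumFn pd n : ℝ) ≤ 4/3 * n * Real.logb 2 n + n := by
  intro n
  induction n using Nat.strong_induction_on with
  | _ n ih =>
  intro hn
  rcases Nat.lt_or_ge n 36 with h36 | h36
  · interval_cases n
    · exact upper_base (by norm_num) Sv1 (show 2^0 ≤ 1 by norm_num) (by norm_num)
    · exact upper_base (by norm_num) Sv2 (show 2^1 ≤ 2 by norm_num) (by norm_num)
    · exact upper_base (by norm_num) Sv3 (show 2^1 ≤ 3 by norm_num) (by norm_num)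
    · exact upper_base (by norm_num) Sv4 (show 2^2 ≤ 4 by norm_num) (by norm_num)
    · exact upper_base (by norm_num) Sv5 (show 2^2 ≤ 5 by norm_num) (by norm_num)
    · exact upper_base (by norm_num) Sv6 (show 2^2 ≤ 6 by norm_num) (by norm_num)
    · exact upper_base (by norm_num) Sv7 (show 2^2 ≤ 7 by norm_num) (by norm_num)
    · exact upper_base (by norm_num) Sv8 (show 2^3 ≤ 8 by norm_num) (by norm_num)
    · exact upper_base (by norm_num) Sv9 (show 2^3 ≤ 9 by norm_num) (by norm_num)
    · exact upper_base (by norm_num) Sv10 (show 2^3 ≤ 10 by norm_num) (by norm_num)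
    · exact upper_base (by norm_num) Sv11 (show 2^3 ≤ 11 by norm_num) (by norm_num)
    · exact upper_base (by norm_num) Sv12 (show 2^3 ≤ 12 by norm_num) (by norm_num)
    · exact upper_base (by norm_num) Sv13 (show 2^3 ≤ 13 by norm_num) (by norm_num)
    · exact upper_base (by norm_num) Sv14 (show 2^3 ≤ 14 by norm_num) (by norm_num)
    · exact upper_base (by norm_num) Sv15 (show 2^3 ≤ 15 by norm_num) (by norm_num)
    · exact upper_base (by norm_num) Sv16 (show 2^4 ≤ 16 by norm_num) (by norm_num)
    · exact upper_base (by norm_num) Sv17 (show 2^4 ≤ 17 by norm_num) (by norm_num)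
    · exact upper_base (by norm_num) Sv18 (show 2^4 ≤ 18 by norm_num) (by norm_num)
    · exact upper_base (by norm_num) Sv19 (show 2^4 ≤ 19 by norm_num) (by norm_num)
    · exact upper_base (by norm_num) Sv20 (show 2^4 ≤ 20 by norm_num) (by norm_num)
    · exact upper_base (by norm_num) Sv21 (show 2^4 ≤ 21 by norm_num) (by norm_num)
    · exact upper_base (by norm_num) Sv22 (show 2^4 ≤ 22 by norm_num) (by norm_num)
    · exact upper_base (by norm_num) Sv23 (show 2^4 ≤ 23 by norm_num) (by norm_num)
    · exact upper_base (by norm_num) Sv24 (show 2^4 ≤ 24 by norm_num) (by norm_num)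
    · exact upper_base (by norm_num) Sv25 (show 2^4 ≤ 25 by norm_num) (by norm_num)
    · exact upper_base (by norm_num) Sv26 (show 2^4 ≤ 26 by norm_num) (by norm_num)
    · exact upper_base (by norm_num) Sv27 (show 2^4 ≤ 27 by norm_num) (by norm_num)
    · exact upper_base (by norm_num) Sv28 (show 2^4 ≤ 28 by norm_num) (by norm_num)
    · exact upper_base (by norm_num) Sv29 (show 2^4 ≤ 29 by norm_num) (by norm_num)
    · exact upper_base (by norm_num) Sv30 (show 2^4 ≤ 30 by norm_num) (by norm_num)
    · exact upper_base (by norm_num) Sv31 (show 2^4 ≤ 31 by norm_num) (by norm_num)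
    · exact upper_base (by norm_num) Sv32 (show 2^5 ≤ 32 by norm_num) (by norm_num)
    · exact upper_base (by norm_num) Sv33 (show 2^5 ≤ 33 by norm_num) (by norm_num)
    · exact upper_base (by norm_num) Sv34 (show 2^5 ≤ 34 by norm_num) (by norm_num)
    · exact upper_base (by norm_num) Sv35 (show 2^5 ≤ 35 by norm_num) (by norm_num)
  · -- step
    set m := (n+1)/2 with hm
    have hm1 : 1 ≤ m := by omega
    have hmn : m < n := by omega
    have h2m : n ≤ 2*m := by omega
    have h2m' : 2*m ≤ n+1 := by omega
    have ihm := ih m hmn hm1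
    have hnat : sumFn pd n ≤ 2 * sumFn pd m + 2*m :=
      le_trans (sumFn_mono h2m) (sumFn_double_le m)
    have hcast : (sumFn pd n : ℝ) ≤ 2 * (sumFn pd m : ℝ) + 2*m := by exact_mod_cast hnat
    set Lm := Real.logb 2 m with hLm
    set Ln := Real.logb 2 n with hLn
    set Ln1 := Real.logb 2 (n+1) with hLn1
    have hA : Lm ≤ Ln1 - 1 := by
      have h2 := logb_mono_nat (a := 2*m) (b := n+1) (by omega) (by omega)
      push_cast at h2
      have h3 : Real.logb 2 (2*(m:ℝ)) = 1 + Lm := by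
        rw [Real.logb_mul (by norm_num) (by positivity), Real.logb_self_eq_one one_lt_two, hLm]
      rw [h3] at h2
      rw [hLm, hLn1]
      rw [hLm] at h2
      linarith
    have hB : (n:ℝ) * Ln1 ≤ n * Ln + 3/2 := by
      have h := logb_succ_mul hn
      rw [hLn1, hLn]
      push_cast at h
      linarith
    have hC : Ln1 ≤ (5:ℝ) - 3/2 + 3 * ((n:ℝ)+1) / 64 := by
      have h5 : ((2:ℝ))^5 ≤ (n:ℝ)+1 := by
        have : (36:ℝ) ≤ n := by exact_mod_cast h36
        norm_num; linarith
      have h := logb_le_aux 5 h5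
      rw [hLn1]
      norm_num at h ⊢
      linarith
    have hD : (1:ℝ) ≤ Ln1 := by
      have h2 := logb_mono_nat (a := 2) (b := n+1) (by norm_num) (by omega)
      push_cast at h2
      rw [show Real.logb 2 (2:ℝ) = 1 from Real.logb_self_eq_one one_lt_two] at h2
      rw [hLn1]; linarith
    have hE : (0:ℝ) ≤ m := Nat.cast_nonneg m
    have hF : (n:ℝ) ≤ 2*m := by exact_mod_cast h2m
    have hG : (2:ℝ)*m ≤ n+1 := by exact_mod_cast h2m'
    have hH : (36:ℝ) ≤ n := by exact_mod_cast h36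
    nlinarith [mul_nonneg hE (by linarith : (0:ℝ) ≤ Ln1 - 1 - Lm),
      mul_nonneg (by linarith : (0:ℝ) ≤ (n:ℝ)+1-2*m) (by linarith : (0:ℝ) ≤ Ln1 - 1),
      ihm, hcast, hB, hC]

lemma lower_all : ∀ n : ℕ, 1 ≤ n → (n:ℝ) * (Real.logb 2 n / 3 - 1/18) ≤ (sumFn pd n : ℝ) := by
  intro n
  induction n using Nat.strong_induction_on with
  | _ n ih =>
  intro hn
  rcases Nat.lt_or_ge n 20 with h20 | h20
  · interval_cases n
    · exact lower_base (by norm_num) Sv1 (show 1 ≤ 2^0 by norm_num) (by norm_num)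
    · exact lower_base (by norm_num) Sv2 (show 2 ≤ 2^1 by norm_num) (by norm_num)
    · exact lower_base (by norm_num) Sv3 (show 3 ≤ 2^2 by norm_num) (by norm_num)
    · exact lower_base (by norm_num) Sv4 (show 4 ≤ 2^2 by norm_num) (by norm_num)
    · exact lower_base (by norm_num) Sv5 (show 5 ≤ 2^3 by norm_num) (by norm_num)
    · exact lower_base (by norm_num) Sv6 (show 6 ≤ 2^3 by norm_num) (by norm_num)
    · exact lower_base (by norm_num) Sv7 (show 7 ≤ 2^3 by norm_num) (by norm_num)
    · exact lower_base (by norm_num) Sv8 (show 8 ≤ 2^3 by norm_num) (by norm_num)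
    · exact lower_base (by norm_num) Sv9 (show 9 ≤ 2^4 by norm_num) (by norm_num)
    · exact lower_base (by norm_num) Sv10 (show 10 ≤ 2^4 by norm_num) (by norm_num)
    · exact lower_base (by norm_num) Sv11 (show 11 ≤ 2^4 by norm_num) (by norm_num)
    · exact lower_base (by norm_num) Sv12 (show 12 ≤ 2^4 by norm_num) (by norm_num)
    · exact lower_base (by norm_num) Sv13 (show 13 ≤ 2^4 by norm_num) (by norm_num)
    · exact lower_base (by norm_num) Sv14 (show 14 ≤ 2^4 by norm_num) (by norm_num)
    · exact lower_base (by norm_num) Sv15 (show 15 ≤ 2^4 by norm_num) (by norm_num)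
    · exact lower_base (by norm_num) Sv16 (show 16 ≤ 2^4 by norm_num) (by norm_num)
    · exact lower_base (by norm_num) Sv17 (show 17 ≤ 2^5 by norm_num) (by norm_num)
    · exact lower_base (by norm_num) Sv18 (show 18 ≤ 2^5 by norm_num) (by norm_num)
    · exact lower_base (by norm_num) Sv19 (show 19 ≤ 2^5 by norm_num) (by norm_num)
  · set m := n/2 with hm
    have hm1 : 10 ≤ m := by omega
    have hmn : m < n := by omega
    have h2m : 2*m ≤ n := by omega
    have h2m' : n ≤ 2*m+1 := by omega
    have ihm := ih m hmn (by omega)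
    have hnat : 2 * sumFn pd m + m ≤ sumFn pd n :=
      le_trans (sumFn_double_ge m) (sumFn_mono h2m)
    have hcast : 2 * (sumFn pd m : ℝ) + m ≤ (sumFn pd n : ℝ) := by exact_mod_cast hnat
    set Lm := Real.logb 2 m with hLm
    set Ln := Real.logb 2 n with hLn
    set Lm1 := Real.logb 2 (m+1) with hLm1
    have hA : Ln ≤ 1 + Lm1 := by
      have h2 := logb_mono_nat (a := n) (b := 2*(m+1)) hn (by omega)
      push_cast at h2
      have h3 : Real.logb 2 (2*((m:ℝ)+1)) = 1 + Lm1 := by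
        rw [Real.logb_mul (by norm_num) (by positivity), Real.logb_self_eq_one one_lt_two, hLm1]
      rw [h3] at h2
      rw [hLn, hLm1]
      rw [hLm1] at h2
      linarith
    have hB : (m:ℝ) * Lm1 ≤ m * Lm + 3/2 := by
      have h := logb_succ_mul (n := m) (by omega)
      rw [hLm1, hLm]
      push_cast at h
      linarith
    have hCm1 : Lm1 ≤ (3:ℝ) - 3/2 + 3 * ((m:ℝ)+1) / 16 := by
      have h8 : ((2:ℝ))^3 ≤ (m:ℝ)+1 := by
        have : (10:ℝ) ≤ m := by exact_mod_cast hm1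
        norm_num; linarith
      have h := logb_le_aux 3 h8
      rw [hLm1]
      norm_num at h ⊢
      linarith
    have hE : (0:ℝ) ≤ m := Nat.cast_nonneg m
    have hF : (2:ℝ)*m ≤ n := by exact_mod_cast h2m
    have hG : (n:ℝ) ≤ 2*m+1 := by exact_mod_cast h2m'
    have hH : (10:ℝ) ≤ m := by exact_mod_cast hm1
    have hLn0 : 0 ≤ Ln := by rw [hLn]; exact logb_nat_nonneg hn
    nlinarith [mul_nonneg (by linarith : (0:ℝ) ≤ 2*m+1-n) hLn0,
      mul_nonneg (by linarith : (0:ℝ) ≤ 2*(m:ℝ)+1) (by linarith : (0:ℝ) ≤ 1 + Lm1 - Ln),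
      ihm, hcast, hB, hCm1]

theorem pd_perComplexity_bounds :
    (∀ n : ℕ, 1 ≤ n →
      (1 / 3 : ℝ) * Real.logb 2 n - 1 / 18 ≤ perComplexity pd n ∧
        perComplexity pd n ≤ (4 / 3 : ℝ) * Real.logb 2 n + 3) ∧
      (fun n : ℕ => perComplexity pd n) =Θ[atTop] (fun n : ℕ => Real.log n) := by
  have hbounds : ∀ n : ℕ, 1 ≤ n →
      (1 / 3 : ℝ) * Real.logb 2 n - 1 / 18 ≤ perComplexity pd n ∧
        perComplexity pd n ≤ (4 / 3 : ℝ) * Real.logb 2 n + 3 := by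
    intro n hn
    have hn0 : (0:ℝ) < n := by exact_mod_cast hn
    have hL0 := logb_nat_nonneg hn
    constructor
    · have h := lower_all n hn
      rw [perComplexity, le_div_iff₀ hn0]
      nlinarith
    · have h := upper_all n hn
      rw [perComplexity, div_le_iff₀ hn0]
      nlinarith
  refine ⟨hbounds, ?_⟩
  constructor
  · rw [isBigO_iff]
    refine ⟨7, eventually_atTop.mpr ⟨2, fun n hn => ?_⟩⟩
    have hn1 : 1 ≤ n := by omega
    have hn0 : (0:ℝ) < n := by exact_mod_cast hn1
    have hh0 : 0 ≤ perComplexity pd n := by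
      rw [perComplexity]; positivity
    have hlogn : Real.log 2 ≤ Real.log n := by
      apply Real.log_le_log (by norm_num)
      exact_mod_cast hn
    have hlog2pos : (0:ℝ) < Real.log 2 := lt_trans (by norm_num) log2_gt
    have hlogn0 : 0 ≤ Real.log n := le_trans hlog2pos.le hlogn
    rw [Real.norm_of_nonneg hh0, Real.norm_of_nonneg hlogn0]
    have hub := (hbounds n hn1).2
    have hlb : Real.logb 2 n = Real.log n / Real.log 2 := rfl
    have hlbn : Real.logb 2 n ≤ 3/2 * Real.log n := by
      rw [hlb, div_le_iff₀ hlog2pos]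
      nlinarith [log2_gt, hlogn0]
    have h3 : (3:ℝ) ≤ 9/2 * Real.log n := by nlinarith [log2_gt, hlogn]
    nlinarith
  · rw [isBigO_iff]
    refine ⟨4, eventually_atTop.mpr ⟨2, fun n hn => ?_⟩⟩
    have hn1 : 1 ≤ n := by omega
    have hn0 : (0:ℝ) < n := by exact_mod_cast hn1
    have hh0 : 0 ≤ perComplexity pd n := by rw [perComplexity]; positivity
    have hlogn : Real.log 2 ≤ Real.log n := by
      apply Real.log_le_log (by norm_num)
      exact_mod_cast hn
    have hlog2pos : (0:ℝ) < Real.log 2 := lt_trans (by norm_num) log2_gt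
    have hlogn0 : 0 ≤ Real.log n := le_trans hlog2pos.le hlogn
    rw [Real.norm_of_nonneg hlogn0, Real.norm_of_nonneg hh0]
    have hlbd := (hbounds n hn1).1
    have hid : Real.log n = Real.logb 2 n * Real.log 2 := by
      rw [Real.logb, div_mul_cancel₀]
      exact ne_of_gt hlog2pos
    have hLb1 : (1:ℝ) ≤ Real.logb 2 n := by
      rw [Real.logb, le_div_iff₀ hlog2pos]
      nlinarith
    nlinarith [log2_lt, log2_gt, hLb1, hlbd, hid]
end
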